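/- Let Ψ : {-1,1}^M → ℝ be orthogonal to all polynomials of degree less than D, and let ψ : {-1,1}^m → ℝ be orthogonal to all polynomials of degree less than d (with d ≥ 1, so in particular ∑_y ψ(y) = 0). Then the dual block composition Ψ ⋆ ψ : ({-1,1}^m)^M → ℝ is orthogonal to every polynomial q : ({-1,1}^m)^M → ℝ of degree less than D·d. -/

import Mathlib

open Finset MvPolynomial

private lemma cube_delta {M : ℕ} {w s : Fin M → ℝ}
    (hw : ∀ i, w i = -1 ∨ w i = 1) (hs : ∀ i, s i = -1 ∨ s i = 1) :
    (∏ i, (1 + w i * s i)) = if w = s then (2:ℝ)^M else 0 := by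
  by_cases h : w = s
  · subst h
    rw [if_pos rfl]
    have h2 : ∀ i ∈ Finset.univ, (1 + w i * w i) = (2:ℝ) := by
      intro i _; rcases hw i with h|h <;> rw [h] <;> norm_num
    rw [Finset.prod_congr rfl h2, Finset.prod_const, Finset.card_univ, Fintype.card_fin]
  · rw [if_neg h]
    have : ∃ i, w i ≠ s i := by
      by_contra hc; push_neg at hc; exact h (funext hc)
    obtain ⟨i, hi⟩ := this
    apply Finset.prod_eq_zero (Finset.mem_univ i)
    rcases hw i with h1|h1 <;> rcases hs i with h2|h2 <;>
      first
        | exact absurd (h1.trans h2.symm) hi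
        | (rw [h1, h2]; norm_num)

private lemma cube_inversion {M : ℕ} (Ψ : (Fin M → ℝ) → ℝ) (s : Fin M → ℝ)
    (hs : ∀ i, s i = -1 ∨ s i = 1) :
    (2:ℝ)^M * Ψ s =
      ∑ w ∈ Fintype.piFinset (fun _ : Fin M => ({-1, 1} : Finset ℝ)),
        Ψ w * ∏ i, (1 + w i * s i) := by
  have hmem : s ∈ Fintype.piFinset (fun _ : Fin M => ({-1, 1} : Finset ℝ)) := by
    rw [Fintype.mem_piFinset]
    intro i; rcases hs i with h|h <;> simp [h]
  have hcong : ∀ w ∈ Fintype.piFinset (fun _ : Fin M => ({-1, 1} : Finset ℝ)),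
      Ψ w * ∏ i, (1 + w i * s i) = if w = s then (2:ℝ)^M * Ψ s else 0 := by
    intro w hw
    have hw' : ∀ i, w i = -1 ∨ w i = 1 := by
      rw [Fintype.mem_piFinset] at hw
      intro i; have := hw i; simpa using this
    rw [cube_delta hw' hs]
    by_cases h : w = s
    · subst h; rw [if_pos rfl, if_pos rfl]; ring
    · rw [if_neg h, if_neg h, mul_zero]
  rw [Finset.sum_congr rfl hcong, Finset.sum_ite_eq' _ s, if_pos hmem]

private lemma key_monomial (M m D d : ℕ) (hd : 1 ≤ d)
    (Ψ : (Fin M → ℝ) → ℝ) (ψ : (Fin m → ℝ) → ℝ)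
    (hΨ : ∀ Q : MvPolynomial (Fin M) ℝ, Q.totalDegree < D →
      ∑ z ∈ Fintype.piFinset (fun _ : Fin M => ({-1, 1} : Finset ℝ)),
        Ψ z * MvPolynomial.eval z Q = 0)
    (hψ : ∀ q : MvPolynomial (Fin m) ℝ, q.totalDegree < d →
      ∑ y ∈ Fintype.piFinset (fun _ : Fin m => ({-1, 1} : Finset ℝ)),
        ψ y * MvPolynomial.eval y q = 0)
    (α : Fin M × Fin m → ℕ)
    (hα : ∑ ij : Fin M × Fin m, α ij < D * d) :
    ∑ x ∈ Fintype.piFinset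
        (fun _ : Fin M => Fintype.piFinset (fun _ : Fin m => ({-1, 1} : Finset ℝ))),
      ((2 : ℝ) ^ M * Ψ (fun i => if 0 ≤ ψ (x i) then 1 else -1) * ∏ i, |ψ (x i)|) *
        ∏ ij : Fin M × Fin m, (x ij.1 ij.2) ^ (α ij) = 0 := by
  classical
  set Cm := Fintype.piFinset (fun _ : Fin m => ({-1, 1} : Finset ℝ)) with hCmdef
  set CM := Fintype.piFinset (fun _ : Fin M => ({-1, 1} : Finset ℝ)) with hCMdef
  set σ : (Fin m → ℝ) → ℝ := fun y => if 0 ≤ ψ y then 1 else -1 with hσdef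
  have hσpm : ∀ y, σ y = -1 ∨ σ y = 1 := by
    intro y; by_cases h : 0 ≤ ψ y <;> simp [hσdef, h]
  have hσabs : ∀ y, σ y * |ψ y| = ψ y := by
    intro y
    by_cases h : 0 ≤ ψ y
    · simp [hσdef, h, abs_of_nonneg h]
    · push_neg at h
      simp [hσdef, not_le.mpr h, abs_of_neg h]
  set A : Fin M → ℝ := fun i => ∑ y ∈ Cm, |ψ y| * ∏ j, y j ^ α (i, j) with hAdef
  set B : Fin M → ℝ := fun i => ∑ y ∈ Cm, ψ y * ∏ j, y j ^ α (i, j) with hBdef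
  have hBzero : ∀ i, (∑ j, α (i, j)) < d → B i = 0 := by
    intro i hi
    have hdeg : (∏ j, (X j : MvPolynomial (Fin m) ℝ) ^ α (i, j)).totalDegree < d := by
      calc (∏ j, (X j : MvPolynomial (Fin m) ℝ) ^ α (i, j)).totalDegree
          ≤ ∑ j, ((X j : MvPolynomial (Fin m) ℝ) ^ α (i, j)).totalDegree :=
            totalDegree_finset_prod _ _
        _ ≤ ∑ j, α (i, j) * (X j : MvPolynomial (Fin m) ℝ).totalDegree :=
            Finset.sum_le_sum fun j _ => totalDegree_pow _ _
        _ = ∑ j, α (i, j) := by simp [totalDegree_X]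
        _ < d := hi
    have := hψ (∏ j, (X j : MvPolynomial (Fin m) ℝ) ^ α (i, j)) hdeg
    simpa [hBdef] using this
  -- Step 1: rewrite each summand using inversion
  have step1 : ∀ x ∈ Fintype.piFinset (fun _ : Fin M => Cm),
      ((2 : ℝ) ^ M * Ψ (fun i => if 0 ≤ ψ (x i) then 1 else -1) * ∏ i, |ψ (x i)|) *
        ∏ ij : Fin M × Fin m, (x ij.1 ij.2) ^ (α ij)
      = ∑ w ∈ CM, Ψ w *
          ∏ i, ((1 + w i * σ (x i)) * (|ψ (x i)| * ∏ j, (x i j) ^ α (i, j))) := by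
    intro x _
    have hinv := cube_inversion Ψ (fun i => σ (x i)) (fun i => hσpm (x i))
    calc ((2 : ℝ) ^ M * Ψ (fun i => if 0 ≤ ψ (x i) then 1 else -1) * ∏ i, |ψ (x i)|) *
          ∏ ij : Fin M × Fin m, (x ij.1 ij.2) ^ (α ij)
        = ((2 : ℝ) ^ M * Ψ (fun i => σ (x i))) *
            ((∏ i, |ψ (x i)|) * ∏ i, ∏ j, (x i j) ^ α (i, j)) := by
          rw [Fintype.prod_prod_type]; simp only [hσdef]; ring
      _ = (∑ w ∈ CM, Ψ w * ∏ i, (1 + w i * σ (x i))) *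
            ∏ i, (|ψ (x i)| * ∏ j, (x i j) ^ α (i, j)) := by
          rw [hinv, ← Finset.prod_mul_distrib]
      _ = ∑ w ∈ CM, Ψ w *
            ∏ i, ((1 + w i * σ (x i)) * (|ψ (x i)| * ∏ j, (x i j) ^ α (i, j))) := by
          rw [Finset.sum_mul]
          refine Finset.sum_congr rfl fun w _ => ?_
          rw [mul_assoc, ← Finset.prod_mul_distrib]
  rw [Finset.sum_congr rfl step1, Finset.sum_comm]
  -- Step 2: inner sum over x factorizes
  have step2 : ∀ w ∈ CM,
      ∑ x ∈ Fintype.piFinset (fun _ : Fin M => Cm), Ψ w *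
          ∏ i, ((1 + w i * σ (x i)) * (|ψ (x i)| * ∏ j, (x i j) ^ α (i, j)))
      = Ψ w * ∏ i, (A i + w i * B i) := by
    intro w _
    have hfact := Finset.prod_univ_sum (fun _ : Fin M => Cm)
      (fun i y => (1 + w i * σ y) * (|ψ y| * ∏ j, y j ^ α (i, j)))
    rw [← Finset.mul_sum, ← hfact]
    congr 1
    refine Finset.prod_congr rfl fun i _ => ?_
    have : ∀ y ∈ Cm, (1 + w i * σ y) * (|ψ y| * ∏ j, y j ^ α (i, j))
        = |ψ y| * ∏ j, y j ^ α (i, j) + w i * (ψ y * ∏ j, y j ^ α (i, j)) := by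
      intro y _
      have h1 := hσabs y
      calc (1 + w i * σ y) * (|ψ y| * ∏ j, y j ^ α (i, j))
          = |ψ y| * ∏ j, y j ^ α (i, j) + w i * ((σ y * |ψ y|) * ∏ j, y j ^ α (i, j)) := by
            ring
        _ = |ψ y| * ∏ j, y j ^ α (i, j) + w i * (ψ y * ∏ j, y j ^ α (i, j)) := by rw [h1]
    rw [Finset.sum_congr rfl this, Finset.sum_add_distrib, ← Finset.mul_sum]
  rw [Finset.sum_congr rfl step2]
  -- Step 3: expand the product over subsets
  have step3 : ∀ w ∈ CM, Ψ w * ∏ i, (A i + w i * B i)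
      = ∑ T ∈ (Finset.univ : Finset (Fin M)).powerset,
          ((∏ i ∈ T, A i) * ∏ i ∈ Finset.univ \ T, B i) *
            (Ψ w * ∏ i ∈ Finset.univ \ T, w i) := by
    intro w _
    rw [Finset.prod_add, Finset.mul_sum]
    refine Finset.sum_congr rfl fun T _ => ?_
    rw [Finset.prod_mul_distrib]
    ring
  rw [Finset.sum_congr rfl step3, Finset.sum_comm]
  -- Step 4: each subset contributes zero
  apply Finset.sum_eq_zero
  intro T _
  rw [← Finset.mul_sum]
  by_cases hcard : (Finset.univ \ T).card < D
  · have hdeg : (∏ i ∈ Finset.univ \ T, (X i : MvPolynomial (Fin M) ℝ)).totalDegree < D := by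
      calc (∏ i ∈ Finset.univ \ T, (X i : MvPolynomial (Fin M) ℝ)).totalDegree
          ≤ ∑ i ∈ Finset.univ \ T, (X i : MvPolynomial (Fin M) ℝ).totalDegree :=
            totalDegree_finset_prod _ _
        _ = (Finset.univ \ T).card := by simp [totalDegree_X]
        _ < D := hcard
    have h0 := hΨ (∏ i ∈ Finset.univ \ T, (X i : MvPolynomial (Fin M) ℝ)) hdeg
    have : ∑ w ∈ CM, Ψ w * ∏ i ∈ Finset.univ \ T, w i = 0 := by
      simpa using h0
    rw [this, mul_zero]
  · push_neg at hcard
    have hrow : ∃ i ∈ Finset.univ \ T, (∑ j, α (i, j)) < d := by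
      by_contra hc
      push_neg at hc
      have h1 : (Finset.univ \ T).card * d ≤ ∑ i ∈ Finset.univ \ T, ∑ j, α (i, j) := by
        calc (Finset.univ \ T).card * d = ∑ _i ∈ Finset.univ \ T, d := by
              rw [Finset.sum_const, smul_eq_mul]
          _ ≤ ∑ i ∈ Finset.univ \ T, ∑ j, α (i, j) := Finset.sum_le_sum fun i hi => hc i hi
      have h2 : ∑ i ∈ Finset.univ \ T, ∑ j, α (i, j) ≤ ∑ i : Fin M, ∑ j, α (i, j) :=
        Finset.sum_le_sum_of_subset (Finset.subset_univ _)
      have h3 : ∑ i : Fin M, ∑ j, α (i, j) < D * d := by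
        rw [← Fintype.sum_prod_type]; exact hα
      have h4 : D * d ≤ (Finset.univ \ T).card * d :=
        Nat.mul_le_mul_right d hcard
      omega
    obtain ⟨i, hiT, hi⟩ := hrow
    have : ∏ i ∈ Finset.univ \ T, B i = 0 :=
      Finset.prod_eq_zero hiT (hBzero i hi)
    rw [this, mul_zero, zero_mul]

theorem dual_block_composition_phd (M m D d : ℕ) (hd : 1 ≤ d)
    (Ψ : (Fin M → ℝ) → ℝ) (ψ : (Fin m → ℝ) → ℝ)
    (hΨ : ∀ Q : MvPolynomial (Fin M) ℝ, Q.totalDegree < D →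
      ∑ z ∈ Fintype.piFinset (fun _ : Fin M => ({-1, 1} : Finset ℝ)),
        Ψ z * MvPolynomial.eval z Q = 0)
    (hψ : ∀ q : MvPolynomial (Fin m) ℝ, q.totalDegree < d →
      ∑ y ∈ Fintype.piFinset (fun _ : Fin m => ({-1, 1} : Finset ℝ)),
        ψ y * MvPolynomial.eval y q = 0) :
    ∀ q : MvPolynomial (Fin M × Fin m) ℝ, q.totalDegree < D * d →
      ∑ x ∈ Fintype.piFinset
          (fun _ : Fin M => Fintype.piFinset (fun _ : Fin m => ({-1, 1} : Finset ℝ))),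
        ((2 : ℝ) ^ M * Ψ (fun i => if 0 ≤ ψ (x i) then 1 else -1) * ∏ i, |ψ (x i)|) *
          MvPolynomial.eval (fun ij => x ij.1 ij.2) q = 0 := by
  intro q hq
  have step : ∀ x ∈ Fintype.piFinset
      (fun _ : Fin M => Fintype.piFinset (fun _ : Fin m => ({-1, 1} : Finset ℝ))),
      ((2 : ℝ) ^ M * Ψ (fun i => if 0 ≤ ψ (x i) then 1 else -1) * ∏ i, |ψ (x i)|) *
        MvPolynomial.eval (fun ij => x ij.1 ij.2) q
      = ∑ β ∈ q.support, coeff β q *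
          (((2 : ℝ) ^ M * Ψ (fun i => if 0 ≤ ψ (x i) then 1 else -1) * ∏ i, |ψ (x i)|) *
            ∏ ij : Fin M × Fin m, (x ij.1 ij.2) ^ (β ij)) := by
    intro x _
    rw [eval_eq', Finset.mul_sum]
    exact Finset.sum_congr rfl fun β _ => by ring
  rw [Finset.sum_congr rfl step, Finset.sum_comm]
  apply Finset.sum_eq_zero
  intro β hβ
  rw [← Finset.mul_sum]
  have hdeg : ∑ ij : Fin M × Fin m, β ij < D * d := by
    have h1 : (β.sum fun _ e => e) ≤ q.totalDegree := le_totalDegree hβ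
    have h2 : (β.sum fun _ e => e) = ∑ ij : Fin M × Fin m, β ij :=
      Finsupp.sum_fintype _ _ fun _ => rfl
    omega
  rw [key_monomial M m D d hd Ψ ψ hΨ hψ (fun ij => β ij) hdeg, mul_zero]
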